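/- The following statements are equivalent: (1) φ : Γ → Γ has at least one non-quasi-periodic point; (2) (X^Γ, σ_φ) is asymptotically sensitive; (3) (X^Γ, σ_φ) is syndetically sensitive; (4) (X^Γ, σ_φ) is cofinitely sensitive; (5) (X^Γ, σ_φ) is multi-sensitive; (6) (X^Γ, σ_φ) is ergodically sensitive. -/

import Mathlib

open Filter Topology

open scoped Classical in
/-- The metric `D` on `X^Γ`, via a fixed bijection `e : ℕ ≃ Γ`. -/
noncomputable def gsD {X Γ : Type*} (e : ℕ ≃ Γ) (x y : Γ → X) : ℝ :=
  ∑' n : ℕ, (if x (e n) = y (e n) then (0 : ℝ) else 1) / 2 ^ (n + 1)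

/-- The generalized shift `σ_φ`. -/
def gshift {X Γ : Type*} (φ : Γ → Γ) : (Γ → X) → (Γ → X) := fun x => x ∘ φ

/-- `(x, y)` is a scrambled pair of `f` with respect to the distance function `d`. -/
def scrambledPair {Z : Type*} (d : Z → Z → ℝ) (f : Z → Z) (x y : Z) : Prop :=
  liminf (fun n : ℕ => d (f^[n] x) (f^[n] y)) atTop = 0 ∧
    0 < limsup (fun n : ℕ => d (f^[n] x) (f^[n] y)) atTop

/-- `N(V, ε)`: the set of times `n` at which two points of `V` are `ε`-separated by
`σ_φ^n`. -/
noncomputable def NSet {X Γ : Type*} (e : ℕ ≃ Γ) (φ : Γ → Γ) (V : Set (Γ → X)) (ε : ℝ) :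
    Set ℕ :=
  {n : ℕ | ∃ x ∈ V, ∃ y ∈ V, ε < gsD e ((gshift φ)^[n] x) ((gshift φ)^[n] y)}

/-- `A ⊆ ℕ` is syndetic: there is `N ≥ 1` with `{i, i+1, …, i+N} ∩ A ≠ ∅` for all
`i ≥ 1`. -/
def IsSyndeticSet (A : Set ℕ) : Prop :=
  ∃ N : ℕ, 1 ≤ N ∧ ∀ i : ℕ, 1 ≤ i → ∃ j ∈ A, i ≤ j ∧ j ≤ i + N

section Aux
variable {X Γ : Type*}

lemma gshift_iterate (φ : Γ → Γ) (n : ℕ) (x : Γ → X) :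
    (gshift φ)^[n] x = x ∘ φ^[n] := by
  induction n with
  | zero => rfl
  | succ n ih =>
    rw [Function.iterate_succ_apply', ih]
    funext γ
    simp [gshift, Function.iterate_succ_apply]

open scoped Classical in
lemma gsD_summable (e : ℕ ≃ Γ) (x y : Γ → X) :
    Summable (fun n : ℕ => (if x (e n) = y (e n) then (0 : ℝ) else 1) / 2 ^ (n + 1)) := by
  apply Summable.of_nonneg_of_le
    (fun n => div_nonneg (by split <;> norm_num) (by positivity))
    (fun n => ?_) summable_geometric_two
  calc (if x (e n) = y (e n) then (0:ℝ) else 1) / 2 ^ (n + 1)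
      ≤ 1 / 2 ^ (n + 1) := by gcongr; split <;> norm_num
    _ ≤ (1/2) ^ n := by
        rw [div_pow, one_pow, div_le_div_iff₀ (by positivity) (by positivity)]
        rw [one_mul, pow_succ]
        nlinarith [pow_pos (by norm_num : (0:ℝ) < 2) n]

lemma gsD_nonneg (e : ℕ ≃ Γ) (x y : Γ → X) : 0 ≤ gsD e x y := by
  classical
  rw [gsD]
  exact tsum_nonneg fun n => div_nonneg (by split <;> norm_num) (by positivity)

set_option maxHeartbeats 1000000 in
lemma gsD_ge (e : ℕ ≃ Γ) (x y : Γ → X) (k : ℕ) (h : x (e k) ≠ y (e k)) :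
    (1:ℝ) / 2 ^ (k + 1) ≤ gsD e x y := by
  classical
  rw [gsD]
  have := Summable.le_tsum (gsD_summable e x y) k
    (fun j _ => div_nonneg (by split <;> norm_num) (by positivity))
  rwa [if_neg h] at this

set_option maxHeartbeats 1600000 in
lemma gsD_le (e : ℕ ≃ Γ) (x y : Γ → X) (N : ℕ) (h : ∀ k < N, x (e k) = y (e k)) :
    gsD e x y ≤ 1 / 2 ^ N := by
  classical
  rw [gsD]
  have hs := gsD_summable e x y
  rw [← Summable.sum_add_tsum_nat_add N hs]
  have h1 : ∑ i ∈ Finset.range N,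
      (if x (e i) = y (e i) then (0:ℝ) else 1) / 2 ^ (i + 1) = 0 := by
    apply Finset.sum_eq_zero
    intro i hi
    rw [if_pos (h i (Finset.mem_range.mp hi))]
    simp
  rw [h1, zero_add]
  have h2 : ∀ i : ℕ, (if x (e (i + N)) = y (e (i + N)) then (0:ℝ) else 1) / 2 ^ (i + N + 1)
      ≤ (1 / 2 ^ (N + 1)) * (1/2) ^ i := by
    intro i
    have heq : ((1:ℝ) / 2 ^ (N + 1)) * (1/2) ^ i = 1 / 2 ^ (i + N + 1) := by
      rw [div_pow, one_pow, div_mul_div_comm, one_mul, ← pow_add]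
      ring_nf
    rw [heq]
    gcongr
    split <;> norm_num
  calc (∑' i : ℕ, (if x (e (i + N)) = y (e (i + N)) then (0:ℝ) else 1) / 2 ^ (i + N + 1))
      ≤ ∑' i : ℕ, (1 / 2 ^ (N + 1)) * (1/2:ℝ) ^ i :=
        Summable.tsum_le_tsum h2 ((summable_nat_add_iff N).2 hs) (summable_geometric_two.mul_left _)
    _ = (1 / 2 ^ (N + 1)) * 2 := by rw [tsum_mul_left, tsum_geometric_two]
    _ = 1 / 2 ^ N := by rw [pow_succ]; ring

lemma gsD_le_one (e : ℕ ≃ Γ) (x y : Γ → X) : gsD e x y ≤ 1 := by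
  simpa using gsD_le e x y 0 (fun k hk => absurd hk (Nat.not_lt_zero k))

def cyl (x : Γ → X) (F : Finset Γ) : Set (Γ → X) := {y | ∀ γ ∈ F, y γ = x γ}

lemma self_mem_cyl (x : Γ → X) (F : Finset Γ) : x ∈ cyl x F := fun _ _ => rfl

lemma isOpen_cyl [TopologicalSpace X] [DiscreteTopology X] (x : Γ → X) (F : Finset Γ) :
    IsOpen (cyl x F) := by
  have : cyl x F = Set.pi (F : Set Γ) (fun γ => {x γ}) := by
    ext y; simp [cyl, Set.mem_pi]
  rw [this]
  exact isOpen_set_pi F.finite_toSet (fun γ _ => isOpen_discrete _)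

lemma exists_cyl_subset [TopologicalSpace X] {U : Set (Γ → X)} (hU : IsOpen U)
    {x : Γ → X} (hx : x ∈ U) : ∃ F : Finset Γ, cyl x F ⊆ U := by
  rcases isOpen_pi_iff.mp hU x hx with ⟨I, u, h1, h2⟩
  refine ⟨I, fun y hy => h2 fun γ hγ => ?_⟩
  rw [hy γ hγ]
  exact (h1 γ hγ).2

lemma inj_of_not_qp {φ : Γ → Γ} {a : Γ}
    (ha : ¬ ∃ n m : ℕ, 1 ≤ m ∧ m < n ∧ φ^[n] a = φ^[m] a) :
    Function.Injective fun n : ℕ => φ^[n] a := by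
  have key : ∀ {m n : ℕ}, m < n → φ^[n] a ≠ φ^[m] a := by
    intro m n hmn hEq
    rcases Nat.eq_zero_or_pos m with rfl | hm
    · refine ha ⟨n + 1, 1, le_rfl, by omega, ?_⟩
      rw [Function.iterate_succ_apply', hEq]
      simp
    · exact ha ⟨n, m, hm, hmn, hEq⟩
  intro n m h
  by_contra hne
  rcases Nat.lt_or_ge n m with hlt | hge
  · exact key hlt h.symm
  · exact key (lt_of_le_of_ne hge (Ne.symm hne)) h

lemma orbit_finite (φ : Γ → Γ) (a : Γ) {n m : ℕ} (hmn : m < n) (h : φ^[n] a = φ^[m] a) :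
    (Set.range fun k : ℕ => φ^[k] a).Finite := by
  apply Set.Finite.subset ((Set.finite_Iio n).image fun j => φ^[j] a)
  rintro _ ⟨k, rfl⟩
  induction k using Nat.strong_induction_on with
  | _ k ih =>
    rcases Nat.lt_or_ge k n with hk | hk
    · exact ⟨k, hk, rfl⟩
    · have e1 : φ^[k] a = φ^[(k - n) + m] a := by
        have h2 : φ^[k] a = φ^[k - n] (φ^[n] a) := by
          rw [← Function.iterate_add_apply]
          congr 1
          omega
        rw [h2, h, ← Function.iterate_add_apply]
      show φ^[k] a ∈ _
      rw [e1]
      exact ih _ (by omega)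

end Aux

lemma quiet {X Γ : Type*} [TopologicalSpace X] [DiscreteTopology X]
    (e : ℕ ≃ Γ) (φ : Γ → Γ)
    (hq : ∀ a : Γ, ∃ n m : ℕ, 1 ≤ m ∧ m < n ∧ φ^[n] a = φ^[m] a)
    {ε : ℝ} (hε : 0 < ε) (x : Γ → X) :
    ∃ V : Set (Γ → X), IsOpen V ∧ x ∈ V ∧
      ∀ n : ℕ, ∀ y ∈ V, ∀ z ∈ V,
        gsD e ((gshift φ)^[n] y) ((gshift φ)^[n] z) ≤ ε := by
  obtain ⟨N, hN⟩ := exists_pow_lt_of_lt_one hε (by norm_num : (1/2:ℝ) < 1)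
  have horb : ∀ k : ℕ, (Set.range fun j : ℕ => φ^[j] (e k)).Finite := by
    intro k
    obtain ⟨n, m, hm, hmn, hEq⟩ := hq (e k)
    exact orbit_finite φ (e k) hmn hEq
  have hG : (⋃ k ∈ Finset.range N, Set.range fun j : ℕ => φ^[j] (e k)).Finite :=
    Set.Finite.biUnion (Finset.range N).finite_toSet (fun k _ => horb k)
  refine ⟨cyl x hG.toFinset, isOpen_cyl x _, self_mem_cyl x _, ?_⟩
  intro n y hy z hz
  have hle : gsD e ((gshift φ)^[n] y) ((gshift φ)^[n] z) ≤ 1 / 2 ^ N := by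
    apply gsD_le
    intro k hk
    rw [gshift_iterate, gshift_iterate]
    have hmem : φ^[n] (e k) ∈ hG.toFinset := by
      rw [Set.Finite.mem_toFinset]
      exact Set.mem_biUnion (Finset.mem_range.mpr hk) ⟨n, rfl⟩
    simp only [Function.comp_apply]
    rw [hy _ hmem, hz _ hmem]
  have heq : (1:ℝ) / 2 ^ N = (1/2) ^ N := by rw [div_pow, one_pow]
  rw [heq] at hle
  exact hle.trans hN.le

/-- The following are equivalent: (1) `φ` has a non-quasi-periodic point;
(2) `(X^Γ, σ_φ)` is asymptotically sensitive; (3) syndetically sensitive;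
(4) cofinitely sensitive; (5) multi-sensitive; (6) ergodically sensitive. -/
theorem stmt13 {X Γ : Type*} [TopologicalSpace X] [DiscreteTopology X] [Finite X]
    [Nontrivial X] [Countable Γ] [Infinite Γ] (e : ℕ ≃ Γ) (φ : Γ → Γ) :
    List.TFAE
      [ -- (1) φ has a non-quasi-periodic point
        (∃ a : Γ, ¬ ∃ n m : ℕ, 1 ≤ m ∧ m < n ∧ φ^[n] a = φ^[m] a),
        -- (2) asymptotically sensitive
        (∃ ε > (0 : ℝ), ∀ x : Γ → X, ∀ U : Set (Γ → X), IsOpen U → x ∈ U →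
          ∃ y ∈ U,
            ε < limsup (fun n : ℕ => gsD e ((gshift φ)^[n] x) ((gshift φ)^[n] y)) atTop),
        -- (3) syndetically sensitive
        (∃ ε > (0 : ℝ), ∀ V : Set (Γ → X), IsOpen V → V.Nonempty →
          IsSyndeticSet (NSet e φ V ε)),
        -- (4) cofinitely sensitive
        (∃ ε > (0 : ℝ), ∀ V : Set (Γ → X), IsOpen V → V.Nonempty →
          (NSet e φ V ε)ᶜ.Finite),
        -- (5) multi-sensitive
        (∃ ε > (0 : ℝ), ∀ k : ℕ, 1 ≤ k → ∀ V : Fin k → Set (Γ → X),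
          (∀ i, IsOpen (V i)) → (∀ i, (V i).Nonempty) →
            (⋂ i, NSet e φ (V i) ε).Nonempty),
        -- (6) ergodically sensitive
        (∃ ε > (0 : ℝ), ∀ V : Set (Γ → X), IsOpen V → V.Nonempty →
          0 < limsup (fun n : ℕ =>
            ((NSet e φ V ε ∩ Set.Iic n).ncard : ℝ) / (n + 1)) atTop) ] := by
  classical
  tfae_have 1 → 4 := by
    rintro ⟨a, ha⟩
    have hinj := inj_of_not_qp ha
    refine ⟨1 / 2 ^ (e.symm a + 2), by positivity, fun V hV hVne => ?_⟩
    obtain ⟨x, hx⟩ := hVne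
    obtain ⟨F, hF⟩ := exists_cyl_subset hV hx
    have hsub : (NSet e φ V (1 / 2 ^ (e.symm a + 2)))ᶜ ⊆
        (fun n : ℕ => φ^[n] a) ⁻¹' (F : Set Γ) := by
      intro n hn
      by_contra hnF
      apply hn
      obtain ⟨b, hb⟩ := exists_ne (x (φ^[n] a))
      refine ⟨x, hF (self_mem_cyl x F), Function.update x (φ^[n] a) b, hF ?_, ?_⟩
      · intro γ hγ
        have hne : γ ≠ φ^[n] a := by
          rintro rfl
          exact hnF (Finset.mem_coe.mpr hγ)
        exact Function.update_of_ne hne b x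
      · have hne : ((gshift φ)^[n] x) (e (e.symm a)) ≠
            ((gshift φ)^[n] (Function.update x (φ^[n] a) b)) (e (e.symm a)) := by
          rw [gshift_iterate, gshift_iterate]
          simp only [Function.comp_apply, Equiv.apply_symm_apply, Function.update_self]
          exact Ne.symm hb
        calc (1:ℝ) / 2 ^ (e.symm a + 2) < 1 / 2 ^ (e.symm a + 1) :=
              one_div_lt_one_div_of_lt (by positivity)
                (pow_lt_pow_right₀ one_lt_two (by omega))
          _ ≤ _ := gsD_ge e _ _ (e.symm a) hne
    exact ((F.finite_toSet).preimage (Set.injOn_of_injective hinj)).subset hsub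
  tfae_have 1 → 2 := by
    rintro ⟨a, ha⟩
    have hinj := inj_of_not_qp ha
    refine ⟨1 / 2 ^ (e.symm a + 2), by positivity, fun x U hU hxU => ?_⟩
    obtain ⟨F, hF⟩ := exists_cyl_subset hU hxU
    set y : Γ → X := fun γ =>
      if (γ ∈ Set.range fun n : ℕ => φ^[n] a) ∧ γ ∉ F then
        Classical.choose (exists_ne (x γ)) else x γ with hy
    have hyF : y ∈ cyl x F := by
      intro γ hγ
      rw [hy]
      simp only
      rw [if_neg (by tauto)]
    refine ⟨y, hF hyF, ?_⟩
    have hfin : ((fun n : ℕ => φ^[n] a) ⁻¹' (F : Set Γ)).Finite :=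
      (F.finite_toSet).preimage (Set.injOn_of_injective hinj)
    have hev : ∀ᶠ n in atTop, φ^[n] a ∉ (F : Set Γ) := by
      rw [← Nat.cofinite_eq_atTop]
      exact hfin.eventually_cofinite_notMem
    have hfreq : ∃ᶠ n in atTop, (1:ℝ) / 2 ^ (e.symm a + 1) ≤
        gsD e ((gshift φ)^[n] x) ((gshift φ)^[n] y) := by
      apply hev.frequently.mono
      intro n hn
      apply gsD_ge
      rw [gshift_iterate, gshift_iterate]
      simp only [Function.comp_apply, Equiv.apply_symm_apply]
      have hval : y (φ^[n] a) = Classical.choose (exists_ne (x (φ^[n] a))) := by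
        rw [hy]
        simp only
        rw [if_pos ⟨⟨n, rfl⟩, hn⟩]
      rw [hval]
      exact fun hh => (Classical.choose_spec (exists_ne (x (φ^[n] a)))) hh.symm
    have hb : IsBoundedUnder (· ≤ ·) atTop
        (fun n : ℕ => gsD e ((gshift φ)^[n] x) ((gshift φ)^[n] y)) :=
      isBoundedUnder_of ⟨1, fun n => gsD_le_one e _ _⟩
    calc (1:ℝ) / 2 ^ (e.symm a + 2) < 1 / 2 ^ (e.symm a + 1) :=
          one_div_lt_one_div_of_lt (by positivity)
            (pow_lt_pow_right₀ one_lt_two (by omega))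
      _ ≤ _ := le_limsup_of_frequently_le hfreq hb
  tfae_have 2 → 1 := by
    intro h2
    by_contra h1
    push_neg at h1
    obtain ⟨ε, hε, h⟩ := h2
    obtain ⟨V, hVo, hxV, hq⟩ := quiet e φ h1 hε (Classical.arbitrary (Γ → X))
    obtain ⟨yy, hyV, hylt⟩ := h _ V hVo hxV
    have hle : limsup (fun n : ℕ => gsD e ((gshift φ)^[n] (Classical.arbitrary (Γ → X)))
        ((gshift φ)^[n] yy)) atTop ≤ ε :=
      limsup_le_of_le (isCoboundedUnder_le_of_le atTop fun n => gsD_nonneg e _ _)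
        (Eventually.of_forall fun n => hq n _ hxV yy hyV)
    exact absurd (lt_of_lt_of_le hylt hle) (lt_irrefl ε)
  tfae_have 3 → 1 := by
    intro h3
    by_contra h1
    push_neg at h1
    obtain ⟨ε, hε, h⟩ := h3
    obtain ⟨V, hVo, hxV, hq⟩ := quiet e φ h1 hε (Classical.arbitrary (Γ → X))
    obtain ⟨N, hN1, hN⟩ := h V hVo ⟨_, hxV⟩
    obtain ⟨j, hj, -, -⟩ := hN 1 le_rfl
    obtain ⟨u, hu, v, hv, huv⟩ := hj
    exact absurd (hq j u hu v hv) (not_le.mpr huv)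
  tfae_have 5 → 1 := by
    intro h5
    by_contra h1
    push_neg at h1
    obtain ⟨ε, hε, h⟩ := h5
    obtain ⟨V, hVo, hxV, hq⟩ := quiet e φ h1 hε (Classical.arbitrary (Γ → X))
    obtain ⟨n, hn⟩ := h 1 le_rfl (fun _ => V) (fun _ => hVo) (fun _ => ⟨_, hxV⟩)
    obtain ⟨u, hu, v, hv, huv⟩ := Set.mem_iInter.mp hn 0
    exact absurd (hq n u hu v hv) (not_le.mpr huv)
  tfae_have 6 → 1 := by
    intro h6
    by_contra h1
    push_neg at h1
    obtain ⟨ε, hε, h⟩ := h6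
    obtain ⟨V, hVo, hxV, hq⟩ := quiet e φ h1 hε (Classical.arbitrary (Γ → X))
    have hpos := h V hVo ⟨_, hxV⟩
    have hempty : NSet e φ V ε = ∅ := by
      ext n
      simp only [Set.mem_empty_iff_false, iff_false]
      rintro ⟨u, hu, v, hv, huv⟩
      exact absurd (hq n u hu v hv) (not_le.mpr huv)
    rw [hempty] at hpos
    simp only [Set.empty_inter, Set.ncard_empty, Nat.cast_zero, zero_div] at hpos
    rw [limsup_const] at hpos
    exact lt_irrefl 0 hpos
  tfae_have 4 → 3 := by
    rintro ⟨ε, hε, h⟩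
    refine ⟨ε, hε, fun V hV hVne => ?_⟩
    obtain ⟨M, hM⟩ := (h V hV hVne).bddAbove
    refine ⟨M + 1, by omega, fun i hi => ⟨i + M + 1, ?_, by omega, by omega⟩⟩
    by_contra hc
    exact absurd (hM hc) (by omega)
  tfae_have 4 → 5 := by
    rintro ⟨ε, hε, h⟩
    refine ⟨ε, hε, fun k _ V hVo hVne => ?_⟩
    have hfin : (⋃ i, (NSet e φ (V i) ε)ᶜ).Finite :=
      Set.finite_iUnion fun i => h (V i) (hVo i) (hVne i)
    have hcompl := hfin.infinite_compl
    rw [Set.compl_iUnion] at hcompl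
    simp only [compl_compl] at hcompl
    exact hcompl.nonempty
  tfae_have 4 → 6 := by
    rintro ⟨ε, hε, h⟩
    refine ⟨ε, hε, fun V hV hVne => ?_⟩
    obtain ⟨M, hM⟩ := (h V hV hVne).bddAbove
    have hmem : ∀ j : ℕ, M + 1 ≤ j → j ∈ NSet e φ V ε := by
      intro j hj
      by_contra hj'
      exact absurd (hM hj') (by omega)
    have hb : IsBoundedUnder (· ≤ ·) atTop
        (fun n : ℕ => ((NSet e φ V ε ∩ Set.Iic n).ncard : ℝ) / (n + 1)) := by
      apply isBoundedUnder_of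
      refine ⟨1, fun n => ?_⟩
      rw [div_le_one (by positivity)]
      have h1 : (NSet e φ V ε ∩ Set.Iic n).ncard ≤ n + 1 := by
        have h2 := Set.ncard_le_ncard (Set.inter_subset_right
          (s := NSet e φ V ε) (t := Set.Iic n)) (Set.finite_Iic n)
        have h3 : (Set.Iic n).ncard = n + 1 := by
          rw [← Finset.coe_Iic, Set.ncard_coe_finset, Nat.card_Iic]
        rwa [h3] at h2
      exact_mod_cast h1
    have hfreq : ∃ᶠ n in atTop, (1/2 : ℝ) ≤
        ((NSet e φ V ε ∩ Set.Iic n).ncard : ℝ) / (n + 1) := by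
      apply Filter.Eventually.frequently
      filter_upwards [eventually_ge_atTop (2 * M + 2)] with n hn
      have hsub : Set.Icc (M + 1) n ⊆ NSet e φ V ε ∩ Set.Iic n := fun j hj =>
        ⟨hmem j hj.1, hj.2⟩
      have h2 := Set.ncard_le_ncard hsub ((Set.finite_Iic n).subset Set.inter_subset_right)
      have h3 : (Set.Icc (M + 1) n).ncard = n + 1 - (M + 1) := by
        rw [← Finset.coe_Icc, Set.ncard_coe_finset, Nat.card_Icc]
      rw [h3] at h2
      have h1 : n - M ≤ (NSet e φ V ε ∩ Set.Iic n).ncard := by omega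
      rw [le_div_iff₀ (by positivity)]
      have h3 : ((n : ℝ) - M) ≤ ((NSet e φ V ε ∩ Set.Iic n).ncard : ℝ) := by
        have h5 := (Nat.cast_le (α := ℝ)).mpr h1
        rwa [Nat.cast_sub (by omega)] at h5
      have h4 : (2 * (M : ℝ) + 2) ≤ n := by exact_mod_cast hn
      linarith
    exact lt_of_lt_of_le (by norm_num) (le_limsup_of_frequently_le hfreq hb)
  tfae_finish
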